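/- arXiv:2410.10788 — 3 statements merged into one kernel-verified Lean document; each statement's English description precedes it below -/
import Mathlib

section
/- Let I ⊆ ℝ² be a finite set of ideal points, let B(c,r) be a yolk of I with r > 0, and let (a,b) be a median hyperplane of I tangent to B(c,r). If the line H(a,b) contains exactly one point of I, then that point equals the point of tangency c + (b − ⟪a,c⟫)·a. -/
open scoped RealInnerProductSpace
open Real

noncomputable section

/-- Points of Euclidean space `ℝ^k`. -/
abbrev Pt (k : ℕ) := EuclideanSpace ℝ (Fin k)

/-- `(a, b)` (with `‖a‖ = 1`) is a median hyperplane for the finite set of ideal points `I`: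
at least `|I|/2` points are on each closed side. -/
def IsMedianHyperplane {k : ℕ} (I : Finset (Pt k)) (a : Pt k) (b : ℝ) : Prop :=
  ‖a‖ = 1 ∧
    (I.card : ℝ) / 2 ≤ ((I.filter fun x => ⟪a, x⟫ ≤ b).card : ℝ) ∧
    (I.card : ℝ) / 2 ≤ ((I.filter fun x => b ≤ ⟪a, x⟫).card : ℝ)

/-- A limiting median hyperplane for `I ⊆ ℝ^k` is a median hyperplane containing at least
`k` points of `I`. -/
def IsLimitingMedianHyperplane {k : ℕ} (I : Finset (Pt k)) (a : Pt k) (b : ℝ) : Prop :=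
  IsMedianHyperplane I a b ∧ k ≤ (I.filter fun x => ⟪a, x⟫ = b).card

/-- The yolk radius: infimum of `r ≥ 0` such that some closed ball `B(c,r)` intersects
every median hyperplane of `I` (the ball `B(c,r)` meets `H(a,b)` iff `|⟪a,c⟫ - b| ≤ r`). -/
def yolkRadius {k : ℕ} (I : Finset (Pt k)) : ℝ :=
  sInf {r : ℝ | 0 ≤ r ∧ ∃ c : Pt k, ∀ a b, IsMedianHyperplane I a b → |⟪a, c⟫ - b| ≤ r}

/-- The LP yolk radius: infimum of `r ≥ 0` such that some closed ball `B(c,r)` intersects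
every limiting median hyperplane of `I`. -/
def lpYolkRadius {k : ℕ} (I : Finset (Pt k)) : ℝ :=
  sInf {r : ℝ | 0 ≤ r ∧ ∃ c : Pt k, ∀ a b, IsLimitingMedianHyperplane I a b → |⟪a, c⟫ - b| ≤ r}

/-- `B(c,r)` is a yolk of `I`: it intersects every median hyperplane, and every closed ball
intersecting every median hyperplane has radius at least `r`. -/
def IsYolk {k : ℕ} (I : Finset (Pt k)) (c : Pt k) (r : ℝ) : Prop :=
  (∀ a b, IsMedianHyperplane I a b → |⟪a, c⟫ - b| ≤ r) ∧
  ∀ (c' : Pt k) (r' : ℝ),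
    (∀ a b, IsMedianHyperplane I a b → |⟪a, c'⟫ - b| ≤ r') → r ≤ r'

/-- `B(c,r)` is an LP yolk of `I`: it intersects every limiting median hyperplane, and every
closed ball intersecting every limiting median hyperplane has radius at least `r`. -/
def IsLPYolk {k : ℕ} (I : Finset (Pt k)) (c : Pt k) (r : ℝ) : Prop :=
  (∀ a b, IsLimitingMedianHyperplane I a b → |⟪a, c⟫ - b| ≤ r) ∧
  ∀ (c' : Pt k) (r' : ℝ),
    (∀ a b, IsLimitingMedianHyperplane I a b → |⟪a, c'⟫ - b| ≤ r') → r ≤ r'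

set_option maxHeartbeats 2000000 in
/-- Let `B(c,r)` be a yolk of `I ⊆ ℝ²` with `r > 0` and let `(a,b)` be a
median hyperplane of `I` tangent to `B(c,r)`. If the line `H(a,b)` contains exactly one
point of `I`, then that point is the point of tangency `c + (b - ⟪a,c⟫)·a`. -/
theorem nonlimiting_tangent_at_ideal_point (I : Finset (Pt 2)) (c : Pt 2) (r : ℝ)
    (hyolk : IsYolk I c r) (hr : 0 < r) (a : Pt 2) (b : ℝ)
    (hmed : IsMedianHyperplane I a b) (htan : |⟪a, c⟫ - b| = r)
    (hone : (I.filter fun q => ⟪a, q⟫ = b).card = 1) :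
    ∀ q ∈ I, ⟪a, q⟫ = b → q = c + (b - ⟪a, c⟫) • a := by
  intro q hqI hq
  obtain ⟨hnorm, hle, hge⟩ := hmed
  set v : Pt 2 := c - q with hv
  have hs : ⟪a, c⟫ - b = ⟪a, v⟫ := by
    rw [hv, inner_sub_right, hq]
  set s : ℝ := ⟪a, v⟫ with hsdef
  have hsr : |s| = r := by rw [← hs]; exact htan
  have hs0 : s ≠ 0 := by
    intro h; rw [h, abs_zero] at hsr; linarith
  have hs2pos : 0 < s ^ 2 := by positivity
  by_contra hne
  -- w is the component of v orthogonal to a; it is nonzero since q is not the tangency point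
  set w : Pt 2 := v - s • a with hwdef
  have hw0 : w ≠ 0 := by
    intro h
    apply hne
    have hvs : v = s • a := by rwa [hwdef, sub_eq_zero] at h
    have hcq : c - q = s • a := by rw [← hv]; exact hvs
    have hb : b - ⟪a, c⟫ = -s := by linarith [hs]
    rw [hb]
    have hc : c = s • a + q := by
      rw [← hcq]; abel
    rw [hc]; module
  have haa : ⟪a, a⟫ = (1:ℝ) := by
    rw [real_inner_self_eq_norm_sq, hnorm]; norm_num
  have haw : ⟪a, w⟫ = 0 := by
    rw [hwdef, inner_sub_right, real_inner_smul_right, haa]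
    simp [hsdef]
  set W : ℝ := ‖w‖ ^ 2 with hWdef
  have hW : 0 < W := by
    have : 0 < ‖w‖ := norm_pos_iff.mpr hw0
    positivity
  have hwa : ⟪w, a⟫ = (0:ℝ) := by rw [real_inner_comm]; exact haw
  have hwv : ⟪w, v⟫ = W := by
    have hvw : v = w + s • a := by rw [hwdef]; abel
    rw [hvw, inner_add_right, real_inner_smul_right, hwa, real_inner_self_eq_norm_sq, hWdef]
    ring
  -- choose a small ε, opaquely
  classical
  obtain ⟨ε, hε0, hεmain, hεW⟩ :
      ∃ ε : ℝ, 0 < ε ∧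
        (∀ x ∈ I, ⟪a, x - q⟫ ≠ 0 → ε * (r * (|⟪w, x - q⟫| + 1)) < |⟪a, x - q⟫|) ∧
        ε * (|W - s ^ 2| + 1) < 2 := by
    set S : Finset ℝ :=
      insert (2 / (|W - s ^ 2| + 1))
        ((I.filter fun x => ⟪a, x - q⟫ ≠ 0).image
          fun x => |⟪a, x - q⟫| / (r * (|⟪w, x - q⟫| + 1))) with hSdef
    have hSne : S.Nonempty := ⟨_, Finset.mem_insert_self _ _⟩
    have hSpos : ∀ e ∈ S, 0 < e := by
      intro e he
      rcases Finset.mem_insert.mp he with rfl | he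
      · have : 0 < |W - s ^ 2| + 1 := by positivity
        positivity
      · obtain ⟨x, hx, rfl⟩ := Finset.mem_image.mp he
        have hx' := (Finset.mem_filter.mp hx).2
        have h1 : 0 < |⟪a, x - q⟫| := abs_pos.mpr hx'
        have h2 : 0 < r * (|⟪w, x - q⟫| + 1) := by positivity
        positivity
    have hminpos : 0 < S.min' hSne := hSpos _ (S.min'_mem hSne)
    refine ⟨S.min' hSne / 2, by linarith, ?_, ?_⟩
    · intro x hx hd
      have hmem : x ∈ I.filter fun z => ⟪a, z - q⟫ ≠ 0 := Finset.mem_filter.mpr ⟨hx, hd⟩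
      have he : |⟪a, x - q⟫| / (r * (|⟪w, x - q⟫| + 1)) ∈ S :=
        Finset.mem_insert_of_mem (Finset.mem_image_of_mem _ hmem)
      have h1 := S.min'_le _ he
      have hden : 0 < r * (|⟪w, x - q⟫| + 1) := by positivity
      have h2 : S.min' hSne * (r * (|⟪w, x - q⟫| + 1)) ≤ |⟪a, x - q⟫| :=
        (le_div_iff₀ hden).mp h1
      nlinarith [hminpos, hden]
    · have h1 := S.min'_le _ (Finset.mem_insert_self (2 / (|W - s ^ 2| + 1)) _)
      have h2 : (0:ℝ) < |W - s ^ 2| + 1 := by positivity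
      rw [le_div_iff₀ h2] at h1
      linarith
  set t : ℝ := ε * s with htdef
  have ht_abs : |t| = ε * r := by
    rw [htdef, abs_mul, abs_of_pos hε0, hsr]
  -- the perturbed direction
  have hN2 : ‖a + t • w‖ ^ 2 = 1 + t ^ 2 * W := by
    rw [norm_add_sq_real, real_inner_smul_right, haw, norm_smul, hnorm]
    simp [mul_pow, sq_abs, hWdef]
  have hNpos : 0 < ‖a + t • w‖ := by
    have h1 : (0:ℝ) < 1 + t ^ 2 * W := by positivity
    nlinarith [norm_nonneg (a + t • w), hN2]
  set a' : Pt 2 := (‖a + t • w‖)⁻¹ • (a + t • w) with ha'def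
  set b' : ℝ := ⟪a', q⟫ with hb'def
  have ha'norm : ‖a'‖ = 1 := by
    rw [ha'def, norm_smul, Real.norm_eq_abs, abs_inv, abs_norm]
    field_simp
  have hkey : ∀ x : Pt 2, ⟪a', x⟫ - b' = (‖a + t • w‖)⁻¹ * ⟪a + t • w, x - q⟫ := by
    intro x
    rw [hb'def, ha'def, real_inner_smul_left, real_inner_smul_left, inner_sub_right]
    ring
  have hexp : ∀ x : Pt 2, ⟪a + t • w, x - q⟫ = ⟪a, x - q⟫ + t * ⟪w, x - q⟫ := by
    intro x
    rw [inner_add_left, real_inner_smul_left]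
  have huniq : ∀ x ∈ I, ⟪a, x⟫ = b → x = q := by
    obtain ⟨p, hp⟩ := Finset.card_eq_one.mp hone
    intro x hx hxb
    have hxm : x ∈ I.filter fun z => ⟪a, z⟫ = b := Finset.mem_filter.mpr ⟨hx, hxb⟩
    have hqm : q ∈ I.filter fun z => ⟪a, z⟫ = b := Finset.mem_filter.mpr ⟨hqI, hq⟩
    rw [hp, Finset.mem_singleton] at hxm hqm
    rw [hxm, hqm]
  have hside : ∀ x ∈ I, ⟪a, x - q⟫ ≠ 0 → |t * ⟪w, x - q⟫| < |⟪a, x - q⟫| := by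
    intro x hx hd
    have h2 := hεmain x hx hd
    have h3 : |t * ⟪w, x - q⟫| = ε * r * |⟪w, x - q⟫| := by
      rw [abs_mul, ht_abs]
    rw [h3]
    have h4 : ε * r * |⟪w, x - q⟫| + ε * r = ε * (r * (|⟪w, x - q⟫| + 1)) := by ring
    have h5 : 0 < ε * r := mul_pos hε0 hr
    linarith
  have hinner_sub : ∀ x : Pt 2, ⟪a, x - q⟫ = ⟪a, x⟫ - b := by
    intro x; rw [inner_sub_right, hq]
  -- the perturbed hyperplane is still median
  have hsub1 : (I.filter fun x => ⟪a, x⟫ ≤ b) ⊆ I.filter fun x => ⟪a', x⟫ ≤ b' := by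
    intro x hx
    rw [Finset.mem_filter] at hx ⊢
    refine ⟨hx.1, ?_⟩
    rcases eq_or_lt_of_le hx.2 with heq | hlt
    · have := huniq x hx.1 heq
      subst this
      exact le_of_eq rfl
    · have hd : ⟪a, x - q⟫ < 0 := by rw [hinner_sub]; linarith
      have hd0 : ⟪a, x - q⟫ ≠ 0 := ne_of_lt hd
      have h1 := hside x hx.1 hd0
      have h2 : ⟪a + t • w, x - q⟫ < 0 := by
        rw [hexp]
        have h3 := le_abs_self (t * ⟪w, x - q⟫)
        rw [abs_of_neg hd] at h1
        linarith
      have h4 : ⟪a', x⟫ - b' ≤ 0 := by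
        rw [hkey]
        apply mul_nonpos_of_nonneg_of_nonpos (inv_nonneg.mpr hNpos.le) h2.le
      linarith
  have hsub2 : (I.filter fun x => b ≤ ⟪a, x⟫) ⊆ I.filter fun x => b' ≤ ⟪a', x⟫ := by
    intro x hx
    rw [Finset.mem_filter] at hx ⊢
    refine ⟨hx.1, ?_⟩
    rcases eq_or_lt_of_le hx.2 with heq | hlt
    · have := huniq x hx.1 heq.symm
      subst this
      exact le_of_eq rfl
    · have hd : 0 < ⟪a, x - q⟫ := by rw [hinner_sub]; linarith
      have hd0 : ⟪a, x - q⟫ ≠ 0 := ne_of_gt hd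
      have h1 := hside x hx.1 hd0
      have h2 : 0 < ⟪a + t • w, x - q⟫ := by
        rw [hexp]
        have h3 := neg_abs_le (t * ⟪w, x - q⟫)
        rw [abs_of_pos hd] at h1
        linarith
      have h4 : 0 ≤ ⟪a', x⟫ - b' := by
        rw [hkey]
        exact mul_nonneg (inv_nonneg.mpr hNpos.le) h2.le
      linarith
  have hmed' : IsMedianHyperplane I a' b' := by
    refine ⟨ha'norm, ?_, ?_⟩
    · exact le_trans hle (by exact_mod_cast Finset.card_le_card hsub1)
    · exact le_trans hge (by exact_mod_cast Finset.card_le_card hsub2)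
  -- contradiction with the yolk condition
  have hcon := hyolk.1 a' b' hmed'
  have hval : ⟪a', c⟫ - b' = (‖a + t • w‖)⁻¹ * (s + t * W) := by
    rw [hkey c]
    congr 1
    have hcv : c - q = v := by rw [hv]
    rw [hexp, hcv, hwv, ← hsdef]
  have h5 : 0 < 2 + ε * (W - s ^ 2) := by
    nlinarith [mul_le_mul_of_nonneg_left (neg_abs_le (W - s ^ 2)) hε0.le, hεW, hε0]
  have hsq : s ^ 2 * (1 + t ^ 2 * W) < (s + t * W) ^ 2 := by
    have h6 : (s + t * W) ^ 2 - s ^ 2 * (1 + t ^ 2 * W)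
        = ε * s ^ 2 * W * (2 + ε * (W - s ^ 2)) := by
      rw [htdef]; ring
    nlinarith [mul_pos (mul_pos (mul_pos hε0 hs2pos) hW) h5]
  -- derive the contradiction
  rw [hval, abs_mul, abs_inv, abs_norm] at hcon
  have h7 : |s + t * W| ≤ r * ‖a + t • w‖ := by
    rw [inv_mul_le_iff₀ hNpos] at hcon
    linarith [hcon]
  have h8 : (s + t * W) ^ 2 ≤ r ^ 2 * ‖a + t • w‖ ^ 2 := by
    have h9 := mul_self_le_mul_self (abs_nonneg (s + t * W)) h7
    rw [abs_mul_abs_self] at h9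
    nlinarith [norm_nonneg (a + t • w), hr]
  have h10 : r ^ 2 * ‖a + t • w‖ ^ 2 = s ^ 2 * (1 + t ^ 2 * W) := by
    rw [hN2, ← sq_abs s, hsr]
  linarith [h8, h10 ▸ h8, hsq]
end
end

section
/- Let k ≥ 2, let I' ⊆ ℝ^{k−1} be a finite set of ideal points, and let I = {(π, 0) : π ∈ I'} ⊆ ℝ^k be its embedding into the hyperplane {x ∈ ℝ^k : x_k = 0}. Then: (1) if (a,b) with a ∈ ℝ^{k−1}, ‖a‖₂ = 1 is a median hyperplane for I', then ((a,0), b) is a median hyperplane for I; and (2) the yolk radius of I is at least the yolk radius of I'. -/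
open scoped RealInnerProductSpace
open Real

noncomputable section

/-- Embedding of `ℝ^n` into the hyperplane `{x ∈ ℝ^(n+1) : x_(n+1) = 0}`, appending a
zero last coordinate. -/
def embLast {n : ℕ} (x : Pt n) : Pt (n + 1) := WithLp.toLp 2 (Fin.snoc (WithLp.ofLp x) 0)

lemma embLast_inj {n : ℕ} : Function.Injective (embLast (n := n)) := by
  intro x y h
  ext i
  have := congrArg (fun v : Pt (n + 1) => v (Fin.castSucc i)) h
  simpa [embLast] using this

lemma inner_embLast {n : ℕ} (a : Pt n) (c : Pt (n + 1)) :
    ⟪embLast a, c⟫ = ⟪a, (WithLp.toLp 2 (Fin.init c) : Pt n)⟫ := by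
  simp [embLast, PiLp.inner_apply, Fin.sum_univ_castSucc, Fin.init]

lemma inner_embLast_embLast {n : ℕ} (a x : Pt n) :
    ⟪embLast a, embLast x⟫ = ⟪a, x⟫ := by
  rw [inner_embLast]
  congr 1
  ext i
  simp [embLast, Fin.init]

lemma norm_embLast {n : ℕ} (a : Pt n) : ‖embLast a‖ = ‖a‖ := by
  simp [EuclideanSpace.norm_eq, embLast, Fin.sum_univ_castSucc]

open scoped Classical in
/-- Let `k = n + 1 ≥ 2`, let `I' ⊆ ℝ^(k-1)` be finite, and let `I ⊆ ℝ^k` be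
its embedding into the hyperplane `{x : x_k = 0}`. Then (1) every median hyperplane `(a,b)`
of `I'` yields the median hyperplane `((a,0), b)` of `I`, and (2) the yolk radius of `I` is
at least the yolk radius of `I'`. -/
theorem embedded_instance_median_and_yolk (n : ℕ) (hn : 1 ≤ n) (I' : Finset (Pt n)) :
    (∀ (a : Pt n) (b : ℝ), ‖a‖ = 1 → IsMedianHyperplane I' a b →
      IsMedianHyperplane (I'.image embLast) (embLast a) b) ∧
    yolkRadius I' ≤ yolkRadius (I'.image embLast) := by
  classical
  have key : ∀ (a : Pt n) (b : ℝ), IsMedianHyperplane I' a b →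
      IsMedianHyperplane (I'.image embLast) (embLast a) b := by
    rintro a b ⟨ha, h1, h2⟩
    have hfilter : ∀ p : Pt (n+1) → Prop,
        ((I'.image embLast).filter p).card = (I'.filter fun x => p (embLast x)).card := by
      intro p
      rw [Finset.filter_image, Finset.card_image_of_injective _ embLast_inj]
    refine ⟨by rw [norm_embLast]; exact ha, ?_, ?_⟩
    · rw [Finset.card_image_of_injective _ embLast_inj, hfilter]
      simpa only [inner_embLast_embLast] using h1
    · rw [Finset.card_image_of_injective _ embLast_inj, hfilter]
      simpa only [inner_embLast_embLast] using h2
  refine ⟨fun a b _ h => key a b h, ?_⟩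
  set S' : Set ℝ := {r : ℝ | 0 ≤ r ∧
      ∃ c : Pt n, ∀ a b, IsMedianHyperplane I' a b → |⟪a, c⟫ - b| ≤ r} with hS'
  set S : Set ℝ := {r : ℝ | 0 ≤ r ∧ ∃ c : Pt (n+1),
      ∀ a b, IsMedianHyperplane (I'.image embLast) a b → |⟪a, c⟫ - b| ≤ r} with hS
  have hsub : S ⊆ S' := by
    rintro r ⟨hr, c, hc⟩
    refine ⟨hr, (WithLp.toLp 2 (Fin.init c) : Pt n), fun a b hab => ?_⟩
    have := hc (embLast a) b (key a b hab)
    rwa [inner_embLast] at this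
  rcases I'.eq_empty_or_nonempty with hI | hI
  · -- I' empty : S' is empty, so yolkRadius I' = 0 ≤ yolkRadius I
    have hS'empty : S' = ∅ := by
      rw [Set.eq_empty_iff_forall_notMem]
      rintro r ⟨hr, c, hc⟩
      set a : Pt n := EuclideanSpace.single ⟨0, hn⟩ 1 with ha
      have hna : ‖a‖ = 1 := by simp [ha]
      have hmed : ∀ b : ℝ, IsMedianHyperplane I' a b := by
        intro b
        refine ⟨hna, ?_, ?_⟩ <;> simp [hI]
      have := hc a (⟪a, c⟫ - (r + 1)) (hmed _)
      simp [abs_of_nonneg (by linarith : (0:ℝ) ≤ r + 1)] at this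
      linarith
    have h0 : (0:ℝ) ≤ yolkRadius (I'.image embLast) :=
      Real.sInf_nonneg (fun x hx => hx.1)
    calc yolkRadius I' = 0 := by
          rw [yolkRadius, ← hS', hS'empty, Real.sInf_empty]
      _ ≤ _ := h0
  · -- I' nonempty : S is nonempty, use csInf_le_csInf
    have hSne : S.Nonempty := by
      set r₀ : ℝ := I'.sup' hI (fun x => ‖x‖) with hr₀
      have hr₀0 : 0 ≤ r₀ := le_trans (norm_nonneg _) (Finset.le_sup' _ hI.choose_spec)
      refine ⟨r₀, hr₀0, 0, fun a b hab => ?_⟩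
      obtain ⟨hna, h1, h2⟩ := hab
      have hcard : 0 < ((I'.image embLast).card : ℝ) / 2 := by
        have : 0 < (I'.image embLast).card := Finset.card_pos.2 (hI.image _)
        positivity
      have hbound : ∀ x ∈ I'.image embLast, |⟪a, x⟫| ≤ r₀ := by
        intro x hx
        obtain ⟨y, hy, rfl⟩ := Finset.mem_image.1 hx
        calc |⟪a, embLast y⟫| ≤ ‖a‖ * ‖embLast y‖ := abs_real_inner_le_norm _ _
          _ = ‖y‖ := by rw [hna, norm_embLast, one_mul]
          _ ≤ r₀ := Finset.le_sup' _ hy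
      have hne1 : ((I'.image embLast).filter fun x => ⟪a, x⟫ ≤ b).Nonempty := by
        rw [← Finset.card_pos]
        exact_mod_cast lt_of_lt_of_le hcard h1
      have hne2 : ((I'.image embLast).filter fun x => b ≤ ⟪a, x⟫).Nonempty := by
        rw [← Finset.card_pos]
        exact_mod_cast lt_of_lt_of_le hcard h2
      obtain ⟨x, hx⟩ := hne1
      obtain ⟨y, hy⟩ := hne2
      rw [Finset.mem_filter] at hx hy
      have hx' := abs_le.1 (hbound x hx.1)
      have hy' := abs_le.1 (hbound y hy.1)
      rw [inner_zero_right]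
      rw [abs_le]
      constructor <;> [linarith [hy.2]; linarith [hx.2]]
    exact csInf_le_csInf ⟨0, fun x hx => hx.1⟩ hSne hsub
end
end

section
/- Let η ∈ [−π/2, 0), α ∈ [π/2, π/2 − η], β ∈ [π/2, π], γ ∈ [0, π − β), and δ ∈ [0, π − β − γ). Define D = sin(β+δ+γ) + cos(α+η−γ) − cos(α+η+β+δ) and N = cos(α+η−γ)·cos(δ) − sin(β+δ+γ)·sin(η) − cos(α+η+β+δ)·cos(γ). Then D > 0 and N/D ≥ 1/2. -/
open Real

set_option maxHeartbeats 1000000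

/-- For angular parameters `η ∈ [−π/2, 0)`, `α ∈ [π/2, π/2 − η]`,
`β ∈ [π/2, π]`, `γ ∈ [0, π − β)`, `δ ∈ [0, π − β − γ)`, with
`D = sin(β+δ+γ) + cos(α+η−γ) − cos(α+η+β+δ)` and
`N = cos(α+η−γ)·cos δ − sin(β+δ+γ)·sin η − cos(α+η+β+δ)·cos γ`,
we have `D > 0` and `N/D ≥ 1/2`. -/
theorem inradius_ge_half (η α β γ δ : ℝ)
    (hη : η ∈ Set.Ico (-(π / 2)) 0)
    (hα : α ∈ Set.Icc (π / 2) (π / 2 - η))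
    (hβ : β ∈ Set.Icc (π / 2) π)
    (hγ : γ ∈ Set.Ico 0 (π - β))
    (hδ : δ ∈ Set.Ico 0 (π - β - γ)) :
    0 < sin (β + δ + γ) + cos (α + η - γ) - cos (α + η + β + δ) ∧
    1 / 2 ≤ (cos (α + η - γ) * cos δ - sin (β + δ + γ) * sin η
        - cos (α + η + β + δ) * cos γ) /
      (sin (β + δ + γ) + cos (α + η - γ) - cos (α + η + β + δ)) := by
  obtain ⟨hη1, hη2⟩ := hη
  obtain ⟨hα1, hα2⟩ := hα
  obtain ⟨hβ1, hβ2⟩ := hβ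
  obtain ⟨hγ1, hγ2⟩ := hγ
  obtain ⟨hδ1, hδ2⟩ := hδ
  have hπ := Real.pi_pos
  set x := π / 2 - α - η with hxdef
  set y := π - β - γ - δ with hydef
  -- basic bounds on the new variables
  have hx0 : 0 ≤ x := by rw [hxdef]; linarith
  have hxe : x ≤ -η := by rw [hxdef]; linarith
  have hx2 : x ≤ π / 2 := by linarith
  have hy0 : 0 < y := by rw [hydef]; linarith
  have hvy : γ + y ≤ π / 2 := by rw [hydef]; linarith
  have hγ2' : γ ≤ π / 2 := by linarith
  have hδv : δ ≤ π / 2 - (γ + y) := by rw [hydef]; linarith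
  -- rewrite the three trigonometric quantities
  have e1 : α + η - γ = π / 2 - (x + γ) := by rw [hxdef]; ring
  have e2 : β + δ + γ = π - y := by rw [hydef]; ring
  have e3 : α + η + β + δ = π / 2 - (x + γ + y) + π := by rw [hxdef, hydef]; ring
  have r1 : cos (α + η - γ) = sin (x + γ) := by rw [e1, cos_pi_div_two_sub]
  have r2 : sin (β + δ + γ) = sin y := by rw [e2, sin_pi_sub]
  have r3 : cos (α + η + β + δ) = -sin (x + γ + y) := by
    rw [e3, cos_add_pi, cos_pi_div_two_sub]
  -- sign facts
  have hsx0 : 0 ≤ sin x := sin_nonneg_of_nonneg_of_le_pi hx0 (by linarith)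
  have hcx0 : 0 ≤ cos x := cos_nonneg_of_mem_Icc ⟨by linarith, hx2⟩
  have hsu0 : 0 ≤ sin γ := sin_nonneg_of_nonneg_of_le_pi hγ1 (by linarith)
  have hcu0 : 0 ≤ cos γ := cos_nonneg_of_mem_Icc ⟨by linarith, hγ2'⟩
  have hsv0 : 0 ≤ sin (γ + y) := sin_nonneg_of_nonneg_of_le_pi (by linarith) (by linarith)
  have hcv0 : 0 ≤ cos (γ + y) := cos_nonneg_of_mem_Icc ⟨by linarith, hvy⟩
  have hsy0 : 0 < sin y := sin_pos_of_pos_of_lt_pi hy0 (by linarith)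
  have hst0 : 0 ≤ sin (x + γ) := sin_nonneg_of_nonneg_of_le_pi (by linarith) (by linarith)
  have hsw0 : 0 ≤ sin (x + γ + y) := sin_nonneg_of_nonneg_of_le_pi (by linarith) (by linarith)
  -- monotonicity facts
  have hsuv : sin γ ≤ sin (γ + y) := by
    have h := cos_le_cos_of_nonneg_of_le_pi (x := π / 2 - (γ + y)) (y := π / 2 - γ)
      (by linarith) (by linarith) (by linarith)
    rwa [cos_pi_div_two_sub, cos_pi_div_two_sub] at h
  have hcuv : cos (γ + y) ≤ cos γ := by
    exact cos_le_cos_of_nonneg_of_le_pi hγ1 (by linarith) (by linarith)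
  have hδcos : sin (γ + y) ≤ cos δ := by
    have h := cos_le_cos_of_nonneg_of_le_pi (x := δ) (y := π / 2 - (γ + y))
      hδ1 (by linarith) hδv
    rwa [cos_pi_div_two_sub] at h
  have hηsin : sin η ≤ -sin x := by
    have h := cos_le_cos_of_nonneg_of_le_pi (x := η + π / 2) (y := π / 2 - x)
      (by linarith) (by linarith) (by linarith)
    rw [cos_pi_div_two_sub, cos_add_pi_div_two] at h
    linarith
  -- sin + cos ≥ 1 facts
  have hscx : 1 ≤ sin x + cos x := by
    nlinarith [sin_sq_add_cos_sq x, mul_nonneg hsx0 (sub_nonneg.2 (sin_le_one x)),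
      mul_nonneg hcx0 (sub_nonneg.2 (cos_le_one x))]
  have hscu : 1 ≤ sin γ + cos γ := by
    nlinarith [sin_sq_add_cos_sq γ, mul_nonneg hsu0 (sub_nonneg.2 (sin_le_one γ)),
      mul_nonneg hcu0 (sub_nonneg.2 (cos_le_one γ))]
  have hscv : 1 ≤ sin (γ + y) + cos (γ + y) := by
    nlinarith [sin_sq_add_cos_sq (γ + y), mul_nonneg hsv0 (sub_nonneg.2 (sin_le_one (γ + y))),
      mul_nonneg hcv0 (sub_nonneg.2 (cos_le_one (γ + y)))]
  -- addition formulas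
  have hsy_eq : sin y = sin (γ + y) * cos γ - cos (γ + y) * sin γ := by
    have h := sin_sub (γ + y) γ
    rw [add_sub_cancel_left] at h
    exact h
  have hst_eq : sin (x + γ) = sin x * cos γ + cos x * sin γ := sin_add x γ
  have hsw_eq : sin (x + γ + y) = sin x * cos (γ + y) + cos x * sin (γ + y) := by
    rw [add_assoc, sin_add]
  -- the two key two-variable inequalities
  have L1 : sin y ≤ cos γ * (2 * sin (γ + y) - 1) + cos (γ + y) * (2 * cos γ - 1)
      + 2 * sin y := by
    rw [hsy_eq]
    nlinarith [mul_nonneg (sub_nonneg.2 hcuv)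
        (show (0:ℝ) ≤ 3 * sin (γ + y) + 2 * cos (γ + y) - 1 by linarith),
      mul_nonneg hcv0
        (show (0:ℝ) ≤ 3 * sin (γ + y) + 2 * cos (γ + y) - 2 - sin γ by linarith)]
  have L2 : sin y ≤ sin γ * (2 * sin (γ + y) - 1) + sin (γ + y) * (2 * cos γ - 1) := by
    rw [hsy_eq]
    nlinarith [mul_nonneg hsu0 (show (0:ℝ) ≤ sin (γ + y) + cos (γ + y) - 1 by linarith),
      mul_nonneg hsv0 (show (0:ℝ) ≤ sin γ + cos γ - 1 by linarith)]
  -- the main three-variable inequality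
  have Hge : 0 ≤ sin (x + γ) * (2 * sin (γ + y) - 1) + sin (x + γ + y) * (2 * cos γ - 1)
      + sin y * (2 * sin x - 1) := by
    rw [hst_eq, hsw_eq]
    nlinarith [mul_nonneg hsx0 (sub_nonneg.2 L1), mul_nonneg hcx0 (sub_nonneg.2 L2),
      mul_nonneg hsy0.le (show (0:ℝ) ≤ sin x + cos x - 1 by linarith)]
  -- positivity of D
  have hD : 0 < sin (β + δ + γ) + cos (α + η - γ) - cos (α + η + β + δ) := by
    rw [r1, r2, r3]; linarith
  refine ⟨hD, ?_⟩
  rw [le_div_iff₀ hD]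
  rw [r1, r2, r3]
  have p1 : sin (x + γ) * sin (γ + y) ≤ sin (x + γ) * cos δ :=
    mul_le_mul_of_nonneg_left hδcos hst0
  have p2 : sin y * sin η ≤ sin y * (-sin x) :=
    mul_le_mul_of_nonneg_left hηsin hsy0.le
  linarith [p1, p2, Hge]
end
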